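/- Let G be the complement of a bipartite graph Ḡ = (X ∪ Y, Ē) with |X| = n and |Y| = m. Let X' = {x ∈ X : deg_Ḡ(x) = m} and Y' = {y ∈ Y : deg_Ḡ(y) = n}. If the bipartite graph Ḡ[X' ∪ Y'] has a maximum matching of size t, then Tr_{d₂}(G) = n + m − t. -/

import Mathlib

open SimpleGraph

/-- `P : Fin k → Set V` is a d₂-transitive partition of size `k` of the graph `G`:
its parts are nonempty, every vertex lies in exactly one part, and for `i < j`
every vertex of `P j` is within graph distance 2 of some vertex of `P i`. -/
def IsD2TransPartition {V : Type*} (G : SimpleGraph V) {k : ℕ} (P : Fin k → Set V) : Prop :=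
  (∀ i, (P i).Nonempty) ∧ (∀ v : V, ∃! i, v ∈ P i) ∧
  ∀ i j : Fin k, i < j → ∀ b ∈ P j, ∃ a ∈ P i, G.edist a b ≤ 2

/-- The d₂-transitivity `Tr_{d₂}(G)`: the maximum size of a d₂-transitive partition. -/
noncomputable def Trd2 {V : Type*} (G : SimpleGraph V) : ℕ :=
  sSup {k : ℕ | ∃ P : Fin k → Set V, IsD2TransPartition G P}

/-- `M` is a matching in `H` between `X'` and `Y'`: each pair is an `X'`–`Y'`
edge of `H` and no two pairs share an endpoint. -/
def IsBipMatching {V : Type*} (H : SimpleGraph V) (X' Y' : Set V)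
    (M : Finset (V × V)) : Prop :=
  (∀ p ∈ M, p.1 ∈ X' ∧ p.2 ∈ Y' ∧ H.Adj p.1 p.2) ∧
  (∀ p ∈ M, ∀ q ∈ M, p ≠ q → p.1 ≠ q.1 ∧ p.2 ≠ q.2)

set_option linter.unusedSectionVars false
set_option linter.unusedVariables false
set_option maxHeartbeats 1000000

section helpers

variable {V : Type*} [Fintype V] [DecidableEq V] (G : SimpleGraph V)

lemma aux_full {X Y : Set V} (hdisj : Disjoint X Y)
    (hbip : ∀ a b : V, Gᶜ.Adj a b → ((a ∈ X ∧ b ∈ Y) ∨ (a ∈ Y ∧ b ∈ X)))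
    {m : ℕ} (hm : Y.ncard = m) {x : V} (hx : x ∈ X)
    (hxd : {y : V | Gᶜ.Adj x y}.ncard = m) : ∀ y ∈ Y, Gᶜ.Adj x y := by
  have hsub : {y : V | Gᶜ.Adj x y} ⊆ Y := by
    intro y hy
    rcases hbip x y hy with ⟨_, h⟩ | ⟨h, _⟩
    · exact h
    · exact absurd (Set.disjoint_left.mp hdisj hx h) (fun h => h)
  have := Set.eq_of_subset_of_ncard_le hsub (by rw [hm, hxd])
  intro y hy; rw [← this] at hy; exact hy

lemma aux_nonfull {X Y : Set V} (hdisj : Disjoint X Y)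
    (hbip : ∀ a b : V, Gᶜ.Adj a b → ((a ∈ X ∧ b ∈ Y) ∨ (a ∈ Y ∧ b ∈ X)))
    {m : ℕ} (hm : Y.ncard = m) {x : V} (hx : x ∈ X)
    (hxd : {y : V | Gᶜ.Adj x y}.ncard ≠ m) : ∃ y ∈ Y, ¬ Gᶜ.Adj x y := by
  by_contra h
  push_neg at h
  have hsub : {y : V | Gᶜ.Adj x y} ⊆ Y := by
    intro y hy
    rcases hbip x y hy with ⟨_, h⟩ | ⟨h2, _⟩
    · exact h
    · exact absurd (Set.disjoint_left.mp hdisj hx h2) (fun h => h)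
  have : {y : V | Gᶜ.Adj x y} = Y := Set.Subset.antisymm hsub h
  rw [this, hm] at hxd; exact hxd rfl

lemma aux_same_side {X Y : Set V} (hdisj : Disjoint X Y)
    (hbip : ∀ a b : V, Gᶜ.Adj a b → ((a ∈ X ∧ b ∈ Y) ∨ (a ∈ Y ∧ b ∈ X)))
    {a b : V} (ha : a ∈ X) (hb : b ∈ X) (hab : a ≠ b) : G.Adj a b := by
  by_contra h
  have hc : Gᶜ.Adj a b := by rw [compl_adj]; exact ⟨hab, h⟩
  rcases hbip a b hc with ⟨_, h2⟩ | ⟨h2, _⟩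
  · exact Set.disjoint_left.mp hdisj hb h2
  · exact Set.disjoint_left.mp hdisj ha h2

lemma edist_le_two_of_adj {a b : V} (h : G.Adj a b) : G.edist a b ≤ 2 := by
  calc G.edist a b ≤ (h.toWalk).length := edist_le _
  _ ≤ 2 := by simp

lemma edist_le_two_of_mid {a b c : V} (h1 : G.Adj a c) (h2 : G.Adj c b) :
    G.edist a b ≤ 2 := by
  calc G.edist a b ≤ (Walk.cons h1 h2.toWalk).length := edist_le _
  _ ≤ 2 := by simp

/-- the cross case: `a ∈ X`, `b ∈ Y`, not a conflict pair, then distance ≤ 2. -/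
lemma aux_cross {X Y : Set V} (hdisj : Disjoint X Y)
    (hbip : ∀ a b : V, Gᶜ.Adj a b → ((a ∈ X ∧ b ∈ Y) ∨ (a ∈ Y ∧ b ∈ X)))
    {n m : ℕ} (hn : X.ncard = n) (hm : Y.ncard = m)
    {X' Y' : Set V}
    (hX' : X' = {x ∈ X | {y : V | Gᶜ.Adj x y}.ncard = m})
    (hY' : Y' = {y ∈ Y | {x : V | Gᶜ.Adj y x}.ncard = n})
    {a b : V} (ha : a ∈ X) (hb : b ∈ Y) (hnc : ¬(a ∈ X' ∧ b ∈ Y')) :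
    G.edist a b ≤ 2 := by
  have hab : a ≠ b := fun h => Set.disjoint_left.mp hdisj ha (h ▸ hb)
  by_cases hadj : Gᶜ.Adj a b
  · -- a and b are non-adjacent in G; need a middle vertex
    by_cases haX' : a ∈ X'
    · -- then b ∉ Y', get x ∈ X with ¬Gᶜ.Adj b x
      have hbY' : b ∉ Y' := fun h => hnc ⟨haX', h⟩
      have hbd : {x : V | Gᶜ.Adj b x}.ncard ≠ n := by
        intro h; exact hbY' (by rw [hY']; exact ⟨hb, h⟩)
      obtain ⟨x, hxX, hxn⟩ := aux_nonfull G hdisj.symm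
        (fun a b h => (hbip a b h).symm) hn hb hbd
      have hxa : x ≠ a := fun h => hxn (h ▸ hadj.symm)
      have hxb : x ≠ b := fun h => Set.disjoint_left.mp hdisj hxX (h ▸ hb)
      have h1 : G.Adj a x := aux_same_side G hdisj hbip ha hxX (Ne.symm hxa)
      have h2 : G.Adj x b := by
        by_contra h
        exact hxn (Gᶜ.adj_symm (by rw [compl_adj]; exact ⟨hxb, h⟩))
      exact edist_le_two_of_mid G h1 h2
    · have had : {y : V | Gᶜ.Adj a y}.ncard ≠ m := by
        intro h; exact haX' (by rw [hX']; exact ⟨ha, h⟩)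
      obtain ⟨y, hyY, hyn⟩ := aux_nonfull G hdisj hbip hm ha had
      have hyb : y ≠ b := fun h => hyn (h ▸ hadj)
      have hay : a ≠ y := fun h => Set.disjoint_left.mp hdisj ha (h ▸ hyY)
      have h1 : G.Adj a y := by
        by_contra h
        exact hyn (by rw [compl_adj]; exact ⟨hay, h⟩)
      have h2 : G.Adj y b := aux_same_side G hdisj.symm
        (fun a b h => (hbip a b h).symm) hyY hb hyb
      exact edist_le_two_of_mid G h1 h2
  · exact edist_le_two_of_adj G (by rw [← compl_compl G]; rw [compl_adj]; exact ⟨hab, hadj⟩)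

/-- the conflict case: `a ∈ X'`, `b ∈ Y'` have distance > 2. -/
lemma aux_conflict {X Y : Set V} (hdisj : Disjoint X Y) (hcover : X ∪ Y = Set.univ)
    (hbip : ∀ a b : V, Gᶜ.Adj a b → ((a ∈ X ∧ b ∈ Y) ∨ (a ∈ Y ∧ b ∈ X)))
    {n m : ℕ} (hn : X.ncard = n) (hm : Y.ncard = m)
    {X' Y' : Set V}
    (hX' : X' = {x ∈ X | {y : V | Gᶜ.Adj x y}.ncard = m})
    (hY' : Y' = {y ∈ Y | {x : V | Gᶜ.Adj y x}.ncard = n})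
    {a b : V} (ha : a ∈ X') (hb : b ∈ Y') : ¬ G.edist a b ≤ 2 := by
  have haX : a ∈ X := by rw [hX'] at ha; exact ha.1
  have hbY : b ∈ Y := by rw [hY'] at hb; exact hb.1
  have hafull : ∀ y ∈ Y, Gᶜ.Adj a y := by
    rw [hX'] at ha; exact aux_full G hdisj hbip hm haX ha.2
  have hbfull : ∀ x ∈ X, Gᶜ.Adj b x := by
    rw [hY'] at hb
    exact aux_full G hdisj.symm (fun a b h => (hbip a b h).symm) hn hbY hb.2
  intro hle
  have hne : G.edist a b ≠ ⊤ := fun h => by rw [h] at hle; exact absurd hle (by simp)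
  obtain ⟨p, hp⟩ := exists_walk_of_edist_ne_top hne
  have hplen : p.length ≤ 2 := by
    have : (p.length : ℕ∞) ≤ 2 := hp ▸ hle
    exact_mod_cast this
  cases p with
  | nil => exact Set.disjoint_left.mp hdisj haX hbY
  | cons hac q =>
    rename_i c
    cases q with
    | nil =>
      exact (hafull b hbY).2 hac
    | cons hcd r =>
      rename_i d
      have : r.length = 0 := by
        rw [Walk.length_cons, Walk.length_cons] at hplen; omega
      have hdb : d = b := r.eq_of_length_eq_zero this
      subst hdb
      have hc : c ∈ X ∪ Y := hcover ▸ Set.mem_univ c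
      rcases hc with hcX | hcY
      · exact (hbfull c hcX).2 hcd.symm
      · exact (hafull c hcY).2 hac

variable {V : Type*} [Fintype V] [DecidableEq V]

lemma upper_core {k : ℕ} (P : Fin k → Set V) (hne : ∀ i, (P i).Nonempty)
    (huniq : ∀ v : V, ∃! i, v ∈ P i) (S : Set V) (hS : ∀ i, ¬ P i ⊆ S) :
    k + S.ncard ≤ Fintype.card V := by
  classical
  set f : Fin k → Finset V := fun i => (P i).toFinset with hf
  set f' : Fin k → Finset V := fun i => (P i ∩ S).toFinset with hf'
  have hdisj : ∀ i ∈ Finset.univ, ∀ j ∈ Finset.univ, i ≠ j → Disjoint (f i) (f j) := by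
    intro i _ j _ hij
    rw [Finset.disjoint_left]
    intro v hvi hvj
    simp only [hf, Set.mem_toFinset] at hvi hvj
    obtain ⟨w, _, hw⟩ := huniq v
    exact hij ((hw i hvi).trans (hw j hvj).symm)
  have hdisj' : ∀ i ∈ Finset.univ, ∀ j ∈ Finset.univ, i ≠ j → Disjoint (f' i) (f' j) := by
    intro i _ j _ hij
    refine Finset.disjoint_left.mpr ?_
    intro v hvi hvj
    simp only [hf', Set.mem_toFinset, Set.mem_inter_iff] at hvi hvj
    obtain ⟨w, _, hw⟩ := huniq v
    exact hij ((hw i hvi.1).trans (hw j hvj.1).symm)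
  have hsum1 : ∑ i, (f i).card = Fintype.card V := by
    rw [← Finset.card_biUnion hdisj]
    congr 1
    apply Finset.eq_univ_iff_forall.mpr
    intro v
    obtain ⟨i, hi, _⟩ := huniq v
    exact Finset.mem_biUnion.mpr ⟨i, Finset.mem_univ i, by simp [hf, hi]⟩
  have hsum2 : ∑ i, (f' i).card = S.ncard := by
    rw [← Finset.card_biUnion hdisj']
    rw [Set.ncard_eq_toFinset_card' S]
    congr 1
    ext v
    simp only [Finset.mem_biUnion, hf', Set.mem_toFinset, Set.mem_inter_iff]
    constructor
    · rintro ⟨i, _, _, h⟩; exact h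
    · intro hv
      obtain ⟨i, hi, _⟩ := huniq v
      exact ⟨i, Finset.mem_univ i, hi, hv⟩
  have hterm : ∀ i, 1 + (f' i).card ≤ (f i).card := by
    intro i
    have hlt : (P i ∩ S).ncard < (P i).ncard := by
      apply Set.ncard_lt_ncard _ (Set.toFinite _)
      rw [Set.ssubset_iff_of_subset Set.inter_subset_left]
      obtain ⟨v, hv, hvs⟩ := Set.not_subset.mp (hS i)
      exact ⟨v, hv, fun h => hvs h.2⟩
    rw [Set.ncard_eq_toFinset_card', Set.ncard_eq_toFinset_card'] at hlt
    have := hlt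
    simp only [hf, hf']
    omega
  calc k + S.ncard = ∑ _i : Fin k, 1 + ∑ i, (f' i).card := by simp [hsum2]
  _ = ∑ i, (1 + (f' i).card) := by rw [Finset.sum_add_distrib]
  _ ≤ ∑ i, (f i).card := Finset.sum_le_sum (fun i _ => hterm i)
  _ = Fintype.card V := hsum1

lemma part_bound {k : ℕ} {G : SimpleGraph V} (P : Fin k → Set V)
    (h : IsD2TransPartition G P) : k ≤ Fintype.card V := by
  obtain ⟨hne, huniq, _⟩ := h
  choose g hg using hne
  have : Function.Injective g := by
    intro i j hij
    obtain ⟨w, _, hw⟩ := huniq (g i)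
    exact (hw i (hg i)).trans (hw j (hij ▸ hg j)).symm
  simpa using Fintype.card_le_of_injective g this

variable {V : Type*} [Fintype V] [DecidableEq V]

/-- In a "complete bipartite" situation the max matching size is `min |X'| |Y'|`. -/
lemma matching_eq_min {G : SimpleGraph V} {X' Y' : Set V} {t : ℕ}
    (hdisjXY' : ∀ v, v ∈ X' → v ∈ Y' → False)
    (hadj : ∀ x ∈ X', ∀ y ∈ Y', Gᶜ.Adj x y)
    (hmatch : ∃ M : Finset (V × V), IsBipMatching Gᶜ X' Y' M ∧ M.card = t ∧
      ∀ M' : Finset (V × V), IsBipMatching Gᶜ X' Y' M' → M'.card ≤ t) :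
    t = min X'.ncard Y'.ncard := by
  classical
  obtain ⟨M, hM, hcard, hmax⟩ := hmatch
  apply le_antisymm
  · -- t ≤ min: the first coords are distinct elements of X', etc.
    subst hcard
    rw [le_min_iff]
    constructor
    · rw [Set.ncard_eq_toFinset_card' X']
      apply Finset.card_le_card_of_injOn (fun p => p.1)
      · intro p hp; simp [Set.mem_toFinset]; exact (hM.1 p hp).1
      · intro p hp q hq h
        by_contra hne
        exact (hM.2 p hp q hq hne).1 h
    · rw [Set.ncard_eq_toFinset_card' Y']
      apply Finset.card_le_card_of_injOn (fun p => p.2)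
      · intro p hp; simp [Set.mem_toFinset]; exact (hM.1 p hp).2.1
      · intro p hp q hq h
        by_contra hne
        exact (hM.2 p hp q hq hne).2 h
  · -- min ≤ t: build a matching of size min
    set s := min X'.ncard Y'.ncard with hs
    have hfX : X'.Finite := Set.toFinite _
    have hfY : Y'.Finite := Set.toFinite _
    have hcX : hfX.toFinset.card = X'.ncard := by rw [Set.ncard_eq_toFinset_card]
    have hcY : hfY.toFinset.card = Y'.ncard := by rw [Set.ncard_eq_toFinset_card]
    set eX := hfX.toFinset.equivFinOfCardEq hcX with heX
    set eY := hfY.toFinset.equivFinOfCardEq hcY with heY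
    set xf : Fin s → V := fun i => (eX.symm (Fin.castLE (min_le_left _ _) i) : V) with hxf
    set yf : Fin s → V := fun i => (eY.symm (Fin.castLE (min_le_right _ _) i) : V) with hyf
    have hxmem : ∀ i, xf i ∈ X' := fun i => by
      have := (eX.symm (Fin.castLE (min_le_left _ _) i)).2
      rwa [Set.Finite.mem_toFinset] at this
    have hymem : ∀ i, yf i ∈ Y' := fun i => by
      have := (eY.symm (Fin.castLE (min_le_right _ _) i)).2
      rwa [Set.Finite.mem_toFinset] at this
    have hxinj : Function.Injective xf := by
      intro i j h
      have := eX.symm.injective (Subtype.ext h)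
      simpa [Fin.ext_iff] using congrArg Fin.val this
    have hyinj : Function.Injective yf := by
      intro i j h
      have := eY.symm.injective (Subtype.ext h)
      simpa [Fin.ext_iff] using congrArg Fin.val this
    set M' : Finset (V × V) := Finset.image (fun i => (xf i, yf i)) Finset.univ with hM'
    have hinj : Function.Injective (fun i : Fin s => (xf i, yf i)) := by
      intro i j h
      exact hxinj (congrArg Prod.fst h)
    have hMcard : M'.card = s := by
      rw [hM', Finset.card_image_of_injective _ hinj, Finset.card_univ, Fintype.card_fin]
    have : IsBipMatching Gᶜ X' Y' M' := by
      constructor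
      · rintro p hp
        simp only [hM', Finset.mem_image, Finset.mem_univ, true_and] at hp
        obtain ⟨i, rfl⟩ := hp
        exact ⟨hxmem i, hymem i, hadj _ (hxmem i) _ (hymem i)⟩
      · rintro p hp q hq hne
        simp only [hM', Finset.mem_image, Finset.mem_univ, true_and] at hp hq
        obtain ⟨i, rfl⟩ := hp
        obtain ⟨j, rfl⟩ := hq
        have hij : i ≠ j := fun h => hne (by rw [h])
        exact ⟨fun h => hij (hxinj h), fun h => hij (hyinj h)⟩
    have := hmax M' this
    omega

variable {V : Type*} [Fintype V] [DecidableEq V]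

lemma construct (G : SimpleGraph V) {X Y : Set V} (hdisj : Disjoint X Y)
    (hcover : X ∪ Y = Set.univ)
    (hbip : ∀ a b : V, Gᶜ.Adj a b → ((a ∈ X ∧ b ∈ Y) ∨ (a ∈ Y ∧ b ∈ X)))
    {n m : ℕ} (hn : X.ncard = n) (hm : Y.ncard = m)
    {X' Y' : Set V}
    (hX' : X' = {x ∈ X | {y : V | Gᶜ.Adj x y}.ncard = m})
    (hY' : Y' = {y ∈ Y | {x : V | Gᶜ.Adj y x}.ncard = n})
    (hpq : X'.ncard ≤ Y'.ncard) :
    ∃ P : Fin (n + m - X'.ncard) → Set V, IsD2TransPartition G P := by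
  classical
  have hbip' : ∀ a b : V, Gᶜ.Adj a b → ((a ∈ Y ∧ b ∈ X) ∨ (a ∈ X ∧ b ∈ Y)) :=
    fun a b h => (hbip a b h).symm
  have hX'sub : X' ⊆ X := by rw [hX']; exact Set.sep_subset _ _
  have hY'sub : Y' ⊆ Y := by rw [hY']; exact Set.sep_subset _ _
  set p := X'.ncard with hp
  set q := Y'.ncard with hq
  have hpn : p ≤ n := hn ▸ Set.ncard_le_ncard hX'sub (Set.toFinite X)
  have hqm : q ≤ m := hm ▸ Set.ncard_le_ncard hY'sub (Set.toFinite Y)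
  have hXY' : ∀ v, v ∈ X' → v ∈ Y' → False := fun v h1 h2 =>
    Set.disjoint_left.mp hdisj (hX'sub h1) (hY'sub h2)
  -- enumerations
  have hfX : X'.Finite := Set.toFinite _
  have hfY : Y'.Finite := Set.toFinite _
  have hcX : hfX.toFinset.card = p := (Set.ncard_eq_toFinset_card _ hfX).symm
  have hcY : hfY.toFinset.card = q := (Set.ncard_eq_toFinset_card _ hfY).symm
  set eX := hfX.toFinset.equivFinOfCardEq hcX with heX
  set eY := hfY.toFinset.equivFinOfCardEq hcY with heY
  set xf : Fin p → V := fun i => (eX.symm i : V) with hxf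
  set yf : Fin p → V := fun i => (eY.symm (Fin.castLE hpq i) : V) with hyf
  have hxmem : ∀ i, xf i ∈ X' := fun i => by
    have := (eX.symm i).2; rwa [Set.Finite.mem_toFinset] at this
  have hymem : ∀ i, yf i ∈ Y' := fun i => by
    have := (eY.symm (Fin.castLE hpq i)).2; rwa [Set.Finite.mem_toFinset] at this
  have hxinj : Function.Injective xf := by
    intro i j h
    exact eX.symm.injective (Subtype.ext h)
  have hyinj : Function.Injective yf := by
    intro i j h
    have := eY.symm.injective (Subtype.ext h)
    simpa [Fin.ext_iff] using congrArg Fin.val this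
  have hxsurj : ∀ v ∈ X', ∃ i, xf i = v := by
    intro v hv
    refine ⟨eX ⟨v, hfX.mem_toFinset.mpr hv⟩, ?_⟩
    rw [hxf]; simp
  -- the residual set
  set R : Set V := Set.univ \ (X' ∪ Set.range yf) with hR
  have hyfY' : Set.range yf ⊆ Y' := by rintro v ⟨i, rfl⟩; exact hymem i
  have hdisjXyf : Disjoint X' (Set.range yf) := by
    rw [Set.disjoint_left]
    intro v h1 h2
    exact hXY' v h1 (hyfY' h2)
  have hrange_card : (Set.range yf).ncard = p := by
    rw [← Set.image_univ, Set.ncard_image_of_injective _ hyinj, Set.ncard_univ,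
      Nat.card_eq_fintype_card, Fintype.card_fin]
  have huniv : (Set.univ : Set V).ncard = n + m := by
    rw [← hcover, Set.ncard_union_eq hdisj (Set.toFinite _) (Set.toFinite _), hn, hm]
  have hRcard : R.ncard = n + m - 2 * p := by
    rw [hR, Set.ncard_diff (Set.subset_univ _) (Set.toFinite _), huniv,
      Set.ncard_union_eq hdisjXyf (Set.toFinite _) (Set.toFinite _), hrange_card, ← hp]
    omega
  have hfR : R.Finite := Set.toFinite _
  have hcR : hfR.toFinset.card = n + m - 2 * p := by
    rw [Set.ncard_eq_toFinset_card R hfR] at hRcard; exact hRcard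
  set eR := hfR.toFinset.equivFinOfCardEq hcR with heR
  set rf : Fin (n + m - 2 * p) → V := fun i => (eR.symm i : V) with hrf
  have hrmem : ∀ i, rf i ∈ R := fun i => by
    have := (eR.symm i).2; rwa [Set.Finite.mem_toFinset] at this
  have hrinj : Function.Injective rf := fun i j h => eR.symm.injective (Subtype.ext h)
  have hrsurj : ∀ v ∈ R, ∃ i, rf i = v := by
    intro v hv
    refine ⟨eR ⟨v, hfR.mem_toFinset.mpr hv⟩, ?_⟩
    rw [hrf]; simp
  have hrnX' : ∀ i, rf i ∉ X' := fun i h => (hrmem i).2 (Or.inl h)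
  have hrnyf : ∀ i j, rf i ≠ yf j := fun i j h => (hrmem i).2 (Or.inr ⟨j, h.symm⟩)
  -- index arithmetic
  have hsub : ∀ (i : Fin (n + m - p)), ¬((i : ℕ) < p) → (i : ℕ) - p < n + m - 2 * p := by
    intro i h
    have := i.isLt
    omega
  set P : Fin (n + m - p) → Set V := fun i =>
    if h : (i : ℕ) < p then ({xf ⟨i, h⟩, yf ⟨i, h⟩} : Set V)
    else {rf ⟨(i : ℕ) - p, hsub i h⟩} with hP
  refine ⟨P, ?_, ?_, ?_⟩
  · -- nonempty
    intro i
    by_cases h : (i : ℕ) < p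
    · rw [hP]; simp only [dif_pos h]; exact ⟨xf ⟨i, h⟩, Set.mem_insert _ _⟩
    · rw [hP]; simp only [dif_neg h]; exact ⟨_, rfl⟩
  · -- exists unique
    have hmm : ∀ (j : Fin (n + m - p)) (v : V), v ∈ P j →
        (∃ h : (j : ℕ) < p, v = xf ⟨j, h⟩ ∨ v = yf ⟨j, h⟩) ∨
        (∃ h : ¬(j : ℕ) < p, v = rf ⟨(j : ℕ) - p, hsub j h⟩) := by
      intro j v hv
      by_cases h : (j : ℕ) < p
      · left; refine ⟨h, ?_⟩
        rw [hP] at hv; simp only [dif_pos h] at hv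
        simpa using hv
      · right; refine ⟨h, ?_⟩
        rw [hP] at hv; simp only [dif_neg h] at hv
        simpa using hv
    have hun : ∀ (v : V) (j1 j2 : Fin (n + m - p)), v ∈ P j1 → v ∈ P j2 → j1 = j2 := by
      intro v j1 j2 h1 h2
      rcases hmm j1 v h1 with ⟨ha1, hv1⟩ | ⟨ha1, hv1⟩ <;>
        rcases hmm j2 v h2 with ⟨ha2, hv2⟩ | ⟨ha2, hv2⟩
      · rcases hv1 with rfl | rfl <;> rcases hv2 with hv2 | hv2
        · have := hxinj hv2; simp only [Fin.mk.injEq] at this; exact Fin.ext this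
        · exact ((hXY' _ (hxmem _) (by rw [hv2]; exact hymem _))).elim
        · exact ((hXY' _ (by rw [hv2]; exact hxmem _) (hymem _))).elim
        · have := hyinj hv2; simp only [Fin.mk.injEq] at this; exact Fin.ext this
      · rcases hv1 with rfl | rfl
        · exact ((hrnX' _ (by rw [← hv2]; exact hxmem _))).elim
        · exact ((hrnyf _ _ hv2.symm)).elim
      · rcases hv2 with rfl | rfl
        · exact ((hrnX' _ (by rw [← hv1]; exact hxmem _))).elim
        · exact ((hrnyf _ _ hv1.symm)).elim
      · have := hrinj (hv1.symm.trans hv2)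
        have hval : (j1 : ℕ) - p = (j2 : ℕ) - p := congrArg Fin.val this
        apply Fin.ext; omega
    intro v
    have hex : ∃ j, v ∈ P j := by
      by_cases hvX : v ∈ X'
      · obtain ⟨i, rfl⟩ := hxsurj v hvX
        have hip : (i : ℕ) < n + m - p := by have := i.isLt; omega
        refine ⟨⟨i, hip⟩, ?_⟩
        rw [hP]; simp only [dif_pos i.isLt]
        left
        congr 1
      · by_cases hvY : v ∈ Set.range yf
        · obtain ⟨i, rfl⟩ := hvY
          have hip : (i : ℕ) < n + m - p := by have := i.isLt; omega
          refine ⟨⟨i, hip⟩, ?_⟩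
          rw [hP]; simp only [dif_pos i.isLt]
          right
          show yf i ∈ {yf ⟨i, _⟩}
          congr 1
        · have hvR : v ∈ R := ⟨Set.mem_univ v, fun h => by
            rcases h with h | h
            · exact hvX h
            · exact hvY h⟩
          obtain ⟨i, rfl⟩ := hrsurj v hvR
          have hip : p + (i : ℕ) < n + m - p := by have := i.isLt; omega
          refine ⟨⟨p + i, hip⟩, ?_⟩
          rw [hP]
          have hnp : ¬((⟨p + i, hip⟩ : Fin (n + m - p)) : ℕ) < p := by simp
          simp only [dif_neg hnp]
          show rf i ∈ {rf ⟨p + (i : ℕ) - p, _⟩}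
          have : (⟨p + (i : ℕ) - p, hsub ⟨p + i, hip⟩ hnp⟩ : Fin (n + m - 2 * p)) = i := by
            apply Fin.ext; simp
          rw [this]
          rfl
    obtain ⟨j, hj⟩ := hex
    exact ⟨j, hj, fun j' hj' => hun v j' j hj' hj⟩
  · -- the d₂ condition
    intro i j hij b hb
    have hijval : (i : ℕ) < (j : ℕ) := hij
    by_cases hjp : (j : ℕ) < p
    · have hip : (i : ℕ) < p := lt_trans hijval hjp
      rw [hP] at hb; simp only [dif_pos hjp] at hb
      have hPi : xf ⟨i, hip⟩ ∈ P i ∧ yf ⟨i, hip⟩ ∈ P i := by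
        rw [hP]; simp only [dif_pos hip]
        exact ⟨Set.mem_insert _ _, Set.mem_insert_iff.mpr (Or.inr rfl)⟩
      rcases hb with rfl | hb
      · refine ⟨xf ⟨i, hip⟩, hPi.1, ?_⟩
        apply edist_le_two_of_adj
        apply aux_same_side G hdisj hbip (hX'sub (hxmem _)) (hX'sub (hxmem _))
        intro h
        have := hxinj h
        have := congrArg Fin.val this
        simp at this
        omega
      · simp only [Set.mem_singleton_iff] at hb
        subst hb
        refine ⟨yf ⟨i, hip⟩, hPi.2, ?_⟩
        apply edist_le_two_of_adj
        apply aux_same_side G hdisj.symm hbip' (hY'sub (hymem _)) (hY'sub (hymem _))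
        intro h
        have := hyinj h
        have := congrArg Fin.val this
        simp at this
        omega
    · rw [hP] at hb; simp only [dif_neg hjp, Set.mem_singleton_iff] at hb
      subst hb
      set b := rf ⟨(j : ℕ) - p, hsub j hjp⟩ with hbdef
      have hbR : b ∈ R := hrmem _
      have hbX' : b ∉ X' := hrnX' _
      have hbside : b ∈ X ∪ Y := hcover ▸ Set.mem_univ b
      by_cases hip : (i : ℕ) < p
      · have hPi : xf ⟨i, hip⟩ ∈ P i ∧ yf ⟨i, hip⟩ ∈ P i := by
          rw [hP]; simp only [dif_pos hip]
          exact ⟨Set.mem_insert _ _, Set.mem_insert_iff.mpr (Or.inr rfl)⟩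
        rcases hbside with hbX | hbY
        · refine ⟨xf ⟨i, hip⟩, hPi.1, ?_⟩
          apply edist_le_two_of_adj
          apply aux_same_side G hdisj hbip (hX'sub (hxmem _)) hbX
          intro h
          exact hbX' (h ▸ hxmem _)
        · refine ⟨yf ⟨i, hip⟩, hPi.2, ?_⟩
          apply edist_le_two_of_adj
          apply aux_same_side G hdisj.symm hbip' (hY'sub (hymem _)) hbY
          exact fun h => hrnyf _ _ h.symm
      · set a := rf ⟨(i : ℕ) - p, hsub i hip⟩ with hadef
        have hPi : a ∈ P i := by
          rw [hP]; simp only [dif_neg hip]; rfl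
        have haR : a ∈ R := hrmem _
        have haX' : a ∉ X' := hrnX' _
        have haside : a ∈ X ∪ Y := hcover ▸ Set.mem_univ a
        have hab : a ≠ b := by
          intro h
          have := hrinj h
          have hval := congrArg Fin.val this
          simp at hval
          omega
        refine ⟨a, hPi, ?_⟩
        rcases haside with haX | haY <;> rcases hbside with hbX | hbY
        · exact edist_le_two_of_adj G (aux_same_side G hdisj hbip haX hbX hab)
        · exact aux_cross G hdisj hbip hn hm hX' hY' haX hbY (fun h => haX' h.1)
        · exact aux_cross G hdisj.symm hbip' hm hn hY' hX' haY hbX (fun h => hbX' h.2)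
        · exact edist_le_two_of_adj G (aux_same_side G hdisj.symm hbip' haY hbY hab)
end helpers

theorem stmt_12 {V : Type*} [Fintype V] [DecidableEq V] (G : SimpleGraph V)
    (X Y : Set V) (hdisj : Disjoint X Y) (hcover : X ∪ Y = Set.univ)
    (hbip : ∀ a b : V, Gᶜ.Adj a b → ((a ∈ X ∧ b ∈ Y) ∨ (a ∈ Y ∧ b ∈ X)))
    (n m t : ℕ) (hn : X.ncard = n) (hm : Y.ncard = m)
    (X' Y' : Set V)
    (hX' : X' = {x ∈ X | {y : V | Gᶜ.Adj x y}.ncard = m})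
    (hY' : Y' = {y ∈ Y | {x : V | Gᶜ.Adj y x}.ncard = n})
    (hmatch : ∃ M : Finset (V × V), IsBipMatching Gᶜ X' Y' M ∧ M.card = t ∧
      ∀ M' : Finset (V × V), IsBipMatching Gᶜ X' Y' M' → M'.card ≤ t) :
    Trd2 G = n + m - t := by
  classical
  have hbip' : ∀ a b : V, Gᶜ.Adj a b → ((a ∈ Y ∧ b ∈ X) ∨ (a ∈ X ∧ b ∈ Y)) :=
    fun a b h => (hbip a b h).symm
  have hcover' : Y ∪ X = Set.univ := by rw [Set.union_comm]; exact hcover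
  have hX'sub : X' ⊆ X := by rw [hX']; exact Set.sep_subset _ _
  have hY'sub : Y' ⊆ Y := by rw [hY']; exact Set.sep_subset _ _
  have hXY' : ∀ v, v ∈ X' → v ∈ Y' → False := fun v h1 h2 =>
    Set.disjoint_left.mp hdisj (hX'sub h1) (hY'sub h2)
  have hadj : ∀ x ∈ X', ∀ y ∈ Y', Gᶜ.Adj x y := by
    intro x hx y hy
    rw [hX'] at hx
    exact aux_full G hdisj hbip hm hx.1 hx.2 y (hY'sub hy)
  have ht : t = min X'.ncard Y'.ncard := matching_eq_min hXY' hadj hmatch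
  have hcard : Fintype.card V = n + m := by
    rw [← Nat.card_eq_fintype_card, ← Set.ncard_univ, ← hcover,
      Set.ncard_union_eq hdisj (Set.toFinite _) (Set.toFinite _), hn, hm]
  have hpn : X'.ncard ≤ n := hn ▸ Set.ncard_le_ncard hX'sub (Set.toFinite X)
  have hqm : Y'.ncard ≤ m := hm ▸ Set.ncard_le_ncard hY'sub (Set.toFinite Y)
  have hub : ∀ k ∈ {k : ℕ | ∃ P : Fin k → Set V, IsD2TransPartition G P},
      k ≤ n + m - t := by
    intro k hk
    obtain ⟨P, hne, huniq, htr⟩ := hk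
    by_cases hY'case : ∀ i, ¬ P i ⊆ Y'
    · have := upper_core P hne huniq Y' hY'case
      rw [hcard] at this
      omega
    · push_neg at hY'case
      obtain ⟨i0, hi0⟩ := hY'case
      have hX'case : ∀ i, ¬ P i ⊆ X' := by
        intro i1 hi1
        rcases lt_trichotomy i0 i1 with h | h | h
        · obtain ⟨b, hbmem⟩ := hne i1
          obtain ⟨a, hamem, hd⟩ := htr i0 i1 h b hbmem
          exact aux_conflict G hdisj.symm hcover' hbip' hm hn hY' hX'
            (hi0 hamem) (hi1 hbmem) hd
        · subst h
          obtain ⟨v, hv⟩ := hne i0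
          exact hXY' v (hi1 hv) (hi0 hv)
        · obtain ⟨b, hbmem⟩ := hne i0
          obtain ⟨a, hamem, hd⟩ := htr i1 i0 h b hbmem
          exact aux_conflict G hdisj hcover hbip hn hm hX' hY'
            (hi1 hamem) (hi0 hbmem) hd
      have := upper_core P hne huniq X' hX'case
      rw [hcard] at this
      omega
  have hmem : (n + m - t) ∈ {k : ℕ | ∃ P : Fin k → Set V, IsD2TransPartition G P} := by
    rcases le_total X'.ncard Y'.ncard with hpq | hqp
    · have hc := construct G hdisj hcover hbip hn hm hX' hY' hpq
      have heq : n + m - X'.ncard = n + m - t := by omega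
      rw [heq] at hc
      exact hc
    · have hc := construct G hdisj.symm hcover' hbip' hm hn hY' hX' hqp
      have heq : m + n - Y'.ncard = n + m - t := by omega
      rw [heq] at hc
      exact hc
  have hbdd : BddAbove {k : ℕ | ∃ P : Fin k → Set V, IsD2TransPartition G P} := by
    refine ⟨Fintype.card V, ?_⟩
    rintro k ⟨P, hP⟩
    exact part_bound P hP
  exact le_antisymm (csSup_le ⟨_, hmem⟩ hub) (le_csSup hbdd hmem)
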